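/- For fixed real numbers s > 0, t > 0 and r ≥ 0, the infimum over κ > 0 of the expression (t/s²)·(cosh(κs/2) − 1) − (κ/2)·r equals −ζ_s(t, r), where ζ_s(t,r) = (1/s²)·( r·s·asinh(rs/t) − √(t² + r²s²) + t ). Equivalently, sup_{κ>0} [ (κ/2)·r − (t/s²)·(cosh(κs/2) − 1) ] = ζ_s(t, r). -/

import Mathlib

noncomputable def zeta (s t r : ℝ) : ℝ :=
  (1 / s ^ 2) * (r * s * Real.arsinh (r * s / t) - Real.sqrt (t ^ 2 + r ^ 2 * s ^ 2) + t)

lemma cosh_tangent (a x : ℝ) : Real.sinh a * (x - a) ≤ Real.cosh x - Real.cosh a := by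
  have h1 : x - a + 1 ≤ Real.exp (x - a) := Real.add_one_le_exp _
  have h2 : a - x + 1 ≤ Real.exp (a - x) := Real.add_one_le_exp _
  have e1 : Real.exp x = Real.exp a * Real.exp (x - a) := by rw [← Real.exp_add]; ring_nf
  have e2 : Real.exp (-x) = Real.exp (-a) * Real.exp (a - x) := by rw [← Real.exp_add]; ring_nf
  have pa := Real.exp_pos a
  have pna := Real.exp_pos (-a)
  rw [Real.sinh_eq, Real.cosh_eq, Real.cosh_eq]
  nlinarith [mul_le_mul_of_nonneg_left h1 pa.le, mul_le_mul_of_nonneg_left h2 pna.le]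

theorem sup_eq_zeta (s t r : ℝ) (hs : 0 < s) (ht : 0 < t) (hr : 0 ≤ r) :
    sSup {y : ℝ | ∃ κ : ℝ, 0 < κ ∧
        y = κ / 2 * r - t / s ^ 2 * (Real.cosh (κ * s / 2) - 1)}
      = zeta s t r := by
  set a := Real.arsinh (r * s / t) with ha
  have hsa : Real.sinh a = r * s / t := Real.sinh_arsinh _
  have hca : t * Real.cosh a = Real.sqrt (t ^ 2 + r ^ 2 * s ^ 2) := by
    rw [Real.cosh_arsinh]
    rw [show (1 : ℝ) + (r * s / t) ^ 2 = (t ^ 2 + r ^ 2 * s ^ 2) / t ^ 2 by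
      field_simp]
    rw [Real.sqrt_div' _ (by positivity), Real.sqrt_sq ht.le]
    field_simp
  have hzeta : zeta s t r = (1 / s ^ 2) * (r * s * a - t * Real.cosh a + t) := by
    rw [zeta, hca]
  have hub : ∀ y ∈ {y : ℝ | ∃ κ : ℝ, 0 < κ ∧
      y = κ / 2 * r - t / s ^ 2 * (Real.cosh (κ * s / 2) - 1)}, y ≤ zeta s t r := by
    rintro y ⟨κ, hκ, rfl⟩
    rw [hzeta]
    have key := cosh_tangent a (κ * s / 2)
    rw [hsa] at key
    have key2 : r * s * (κ * s / 2 - a) ≤ t * Real.cosh (κ * s / 2) - t * Real.cosh a := by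
      have := mul_le_mul_of_nonneg_left key ht.le
      calc r * s * (κ * s / 2 - a) = t * (r * s / t * (κ * s / 2 - a)) := by
            field_simp
        _ ≤ t * (Real.cosh (κ * s / 2) - Real.cosh a) := this
        _ = t * Real.cosh (κ * s / 2) - t * Real.cosh a := by ring
    rw [← sub_nonneg]
    have hs2 : (0:ℝ) < s ^ 2 := by positivity
    have expand : (1 / s ^ 2) * (r * s * a - t * Real.cosh a + t)
        - (κ / 2 * r - t / s ^ 2 * (Real.cosh (κ * s / 2) - 1))
        = (1 / s ^ 2) * ((t * Real.cosh (κ * s / 2) - t * Real.cosh a)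
            - r * s * (κ * s / 2 - a)) := by
      field_simp
      ring
    rw [expand]
    exact mul_nonneg (by positivity) (sub_nonneg.mpr key2)
  rcases eq_or_lt_of_le hr with hr0 | hr0
  · -- r = 0 case
    have hz0 : zeta s t r = 0 := by
      rw [zeta, ← hr0]
      simp [Real.sqrt_sq ht.le]
    rw [hz0]
    apply csSup_eq_of_forall_le_of_forall_lt_exists_gt
    · exact ⟨1 / 2 * r - t / s ^ 2 * (Real.cosh (1 * s / 2) - 1), 1, one_pos, rfl⟩
    · intro y hy
      have := hub y hy
      rwa [hz0] at this
    · intro w hw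
      have hcont : ContinuousAt (fun κ : ℝ => κ / 2 * r - t / s ^ 2 * (Real.cosh (κ * s / 2) - 1)) 0 := by
        fun_prop
      have h0 : (fun κ : ℝ => κ / 2 * r - t / s ^ 2 * (Real.cosh (κ * s / 2) - 1)) 0 = 0 := by
        simp
      have hev : ∀ᶠ κ in nhds (0:ℝ), w < κ / 2 * r - t / s ^ 2 * (Real.cosh (κ * s / 2) - 1) :=
        hcont.eventually (p := fun y => w < y) (by rw [h0]; exact eventually_gt_nhds hw)
      have hev' : ∀ᶠ κ in nhdsWithin (0:ℝ) (Set.Ioi 0),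
          w < κ / 2 * r - t / s ^ 2 * (Real.cosh (κ * s / 2) - 1) :=
        hev.filter_mono nhdsWithin_le_nhds
      have hev2 : ∀ᶠ κ in nhdsWithin (0:ℝ) (Set.Ioi 0), (0:ℝ) < κ :=
        eventually_mem_nhdsWithin
      obtain ⟨κ, hκw, hκ0⟩ := (hev'.and hev2).exists
      exact ⟨_, ⟨κ, hκ0, rfl⟩, hκw⟩
  · -- r > 0 case
    have ha0 : 0 < a := Real.arsinh_pos_iff.mpr (by positivity)
    have hmem : zeta s t r ∈ {y : ℝ | ∃ κ : ℝ, 0 < κ ∧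
        y = κ / 2 * r - t / s ^ 2 * (Real.cosh (κ * s / 2) - 1)} := by
      refine ⟨2 * a / s, by positivity, ?_⟩
      have hx : 2 * a / s * s / 2 = a := by field_simp
      rw [hx, hzeta]
      field_simp
      ring
    exact IsGreatest.csSup_eq ⟨hmem, hub⟩
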